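/- Let m ≥ 1, let M ≥ 2 be an integer, let h₀ > 0 and 0 < h ≤ 1, and let g : {0,…,m−1} → ℝ satisfy |g(t)| ≤ h₀ hᵗ for all t. Set ε = π h₀ · (Σ_{t=0}^{m−1} hᵗ) · (m−1)/(2M) and let r > 0. Define f_r(θ) = Σ_{t=0}^{m−1} g(t) cos(tθ) and f_i(θ) = Σ_{t=0}^{m−1} g(t) sin(tθ). Suppose that for every integer m' ∈ {0,…,M}: −r + ε < f_r(m'π/M) < r − ε and −r + ε < f_i(m'π/M) < r − ε. Then for every θ ∈ ℝ, |Σ_{t=0}^{m−1} g(t) e^{−iθt}| < √2 · r. -/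

import Mathlib

private lemma cos_lip16 (x y : ℝ) : |Real.cos x - Real.cos y| ≤ |x - y| := by
  rw [Real.cos_sub_cos, abs_mul, abs_mul]
  have h1 := Real.abs_sin_le_one ((x + y) / 2)
  have h2 := Real.abs_sin_le_abs (x := (x - y) / 2)
  have h3 : |(-2 : ℝ)| = 2 := by norm_num
  have h4 : |(x - y) / 2| = |x - y| / 2 := by
    rw [abs_div]; norm_num
  rw [h3]
  nlinarith [abs_nonneg (Real.sin ((x + y) / 2)), abs_nonneg (Real.sin ((x - y) / 2)),
    abs_nonneg (x - y)]

private lemma sin_lip16 (x y : ℝ) : |Real.sin x - Real.sin y| ≤ |x - y| := by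
  rw [Real.sin_sub_sin, abs_mul, abs_mul]
  have h1 := Real.abs_cos_le_one ((x + y) / 2)
  have h2 := Real.abs_sin_le_abs (x := (x - y) / 2)
  have h3 : |(2 : ℝ)| = 2 := by norm_num
  have h4 : |(x - y) / 2| = |x - y| / 2 := by
    rw [abs_div]; norm_num
  rw [h3]
  nlinarith [abs_nonneg (Real.sin ((x - y) / 2)), abs_nonneg (Real.cos ((x + y) / 2)),
    abs_nonneg (x - y)]

private lemma sum_lip16 (m : ℕ) (g : ℕ → ℝ) (h₀ h : ℝ) (hh₀ : 0 ≤ h₀) (hh : 0 ≤ h)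
    (hg : ∀ t < m, |g t| ≤ h₀ * h ^ t)
    (c : ℝ → ℝ) (hc : ∀ x y : ℝ, |c x - c y| ≤ |x - y|) (a b : ℝ) :
    |(∑ t ∈ Finset.range m, g t * c (t * a)) - ∑ t ∈ Finset.range m, g t * c (t * b)| ≤
      h₀ * (∑ t ∈ Finset.range m, h ^ t) * (((m : ℝ) - 1) * |a - b|) := by
  rw [← Finset.sum_sub_distrib]
  refine (Finset.abs_sum_le_sum_abs _ _).trans ?_
  have hrhs : h₀ * (∑ t ∈ Finset.range m, h ^ t) * (((m : ℝ) - 1) * |a - b|) =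
      ∑ t ∈ Finset.range m, h₀ * h ^ t * (((m : ℝ) - 1) * |a - b|) := by
    rw [← Finset.sum_mul, ← Finset.mul_sum]
  rw [hrhs]
  refine Finset.sum_le_sum fun t ht => ?_
  have htm : (t : ℝ) ≤ (m : ℝ) - 1 := by
    have := Finset.mem_range.mp ht
    have : (t : ℝ) + 1 ≤ (m : ℝ) := by exact_mod_cast this
    linarith
  rw [← mul_sub, abs_mul]
  have hcb : |c (↑t * a) - c (↑t * b)| ≤ (t : ℝ) * |a - b| := by
    refine (hc _ _).trans (le_of_eq ?_)
    rw [← mul_sub, abs_mul, Nat.abs_cast]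
  have hpos : (0 : ℝ) ≤ h₀ * h ^ t := mul_nonneg hh₀ (pow_nonneg hh t)
  calc |g t| * |c (↑t * a) - c (↑t * b)| ≤ (h₀ * h ^ t) * ((t : ℝ) * |a - b|) :=
        mul_le_mul (hg t (Finset.mem_range.mp ht)) hcb (abs_nonneg _)
          hpos
    _ ≤ h₀ * h ^ t * (((m : ℝ) - 1) * |a - b|) := by
        apply mul_le_mul_of_nonneg_left _ hpos
        exact mul_le_mul_of_nonneg_right htm (abs_nonneg _)

/-- Theorem 3, Case C (frequency-domain content): sampled box constraints on
`f_r` and `f_i`, tightened by `ε`, together with the decay constraint, force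
the entire Nyquist locus of the FIR filter into the open disk of radius `√2·r`
centred at the origin. -/
theorem stmt16 (m M : ℕ) (hm : 1 ≤ m) (hM : 2 ≤ M) (h₀ h : ℝ)
    (hh₀ : 0 < h₀) (hh : 0 < h) (hh1 : h ≤ 1)
    (g : ℕ → ℝ) (hg : ∀ t < m, |g t| ≤ h₀ * h ^ t)
    (r : ℝ) (hr : 0 < r)
    (hbox : ∀ m' : ℕ, m' ≤ M →
      (-r + Real.pi * h₀ * (∑ t ∈ Finset.range m, h ^ t) * ((m : ℝ) - 1) / (2 * M) <
        ∑ t ∈ Finset.range m, g t * Real.cos (t * ((m' : ℝ) * Real.pi / M))) ∧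
      ((∑ t ∈ Finset.range m, g t * Real.cos (t * ((m' : ℝ) * Real.pi / M))) <
        r - Real.pi * h₀ * (∑ t ∈ Finset.range m, h ^ t) * ((m : ℝ) - 1) / (2 * M)) ∧
      (-r + Real.pi * h₀ * (∑ t ∈ Finset.range m, h ^ t) * ((m : ℝ) - 1) / (2 * M) <
        ∑ t ∈ Finset.range m, g t * Real.sin (t * ((m' : ℝ) * Real.pi / M))) ∧
      ((∑ t ∈ Finset.range m, g t * Real.sin (t * ((m' : ℝ) * Real.pi / M))) <
        r - Real.pi * h₀ * (∑ t ∈ Finset.range m, h ^ t) * ((m : ℝ) - 1) / (2 * M))) :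
    ∀ θ : ℝ,
      ‖∑ t ∈ Finset.range m, (g t : ℂ) * Complex.exp (-(Complex.I * (θ * t)))‖ <
        Real.sqrt 2 * r := by
  intro θ
  have hπ : (0 : ℝ) < Real.pi := Real.pi_pos
  have hMR : (0 : ℝ) < (M : ℝ) := by exact_mod_cast Nat.lt_of_lt_of_le Nat.zero_lt_two hM
  set S : ℝ := ∑ t ∈ Finset.range m, h ^ t with hSdef
  set ε : ℝ := Real.pi * h₀ * S * ((m : ℝ) - 1) / (2 * M) with hεdef
  set fr : ℝ → ℝ := fun x => ∑ t ∈ Finset.range m, g t * Real.cos (t * x) with hfr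
  set fi : ℝ → ℝ := fun x => ∑ t ∈ Finset.range m, g t * Real.sin (t * x) with hfi
  have hS0 : 0 ≤ S := Finset.sum_nonneg fun t _ => pow_nonneg hh.le t
  have hm1 : (0 : ℝ) ≤ (m : ℝ) - 1 := by
    have : (1 : ℝ) ≤ (m : ℝ) := by exact_mod_cast hm
    linarith
  -- Lipschitz bounds
  have hlipr : ∀ a b : ℝ, |fr a - fr b| ≤ h₀ * S * (((m : ℝ) - 1) * |a - b|) :=
    fun a b => sum_lip16 m g h₀ h hh₀.le hh.le hg Real.cos cos_lip16 a b
  have hlipi : ∀ a b : ℝ, |fi a - fi b| ≤ h₀ * S * (((m : ℝ) - 1) * |a - b|) :=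
    fun a b => sum_lip16 m g h₀ h hh₀.le hh.le hg Real.sin sin_lip16 a b
  -- On the interval [0, π] both functions stay inside the open ball of radius r
  have hgrid : ∀ y : ℝ, 0 ≤ y → y ≤ Real.pi → |fr y| < r ∧ |fi y| < r := by
    intro y hy0 hyπ
    -- choose nearest grid point
    set x : ℝ := y * M / Real.pi with hxdef
    have hx0 : 0 ≤ x := by positivity
    have hxM : x ≤ (M : ℝ) := by
      rw [hxdef, div_le_iff₀ hπ]
      calc y * M ≤ Real.pi * M := by nlinarith
        _ = (M : ℝ) * Real.pi := by ring
    set n : ℤ := round x with hndef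
    have hn0 : 0 ≤ n := by
      rw [hndef, round_eq]
      exact Int.floor_nonneg.mpr (by linarith)
    have hnM : n ≤ (M : ℤ) := by
      rw [hndef, round_eq]
      have : (⌊x + 1 / 2⌋ : ℝ) ≤ x + 1 / 2 := Int.floor_le _
      have : (⌊x + 1 / 2⌋ : ℝ) < (M : ℝ) + 1 := by linarith
      exact_mod_cast Int.lt_add_one_iff.mp (by exact_mod_cast this)
    set m' : ℕ := n.toNat with hm'def
    have hm'M : m' ≤ M := by
      rw [hm'def]; omega
    have hcast : ((m' : ℕ) : ℝ) = (n : ℝ) := by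
      rw [hm'def]; exact_mod_cast congrArg (Int.cast : ℤ → ℝ) (Int.toNat_of_nonneg hn0)
    have hround : |x - (n : ℝ)| ≤ 1 / 2 := abs_sub_round x
    -- distance from y to the grid point
    have hdist : |y - (m' : ℝ) * Real.pi / M| ≤ Real.pi / (2 * M) := by
      have hyeq : y - (m' : ℝ) * Real.pi / M = (x - (n : ℝ)) * (Real.pi / M) := by
        rw [hcast, hxdef]; field_simp
      rw [hyeq, abs_mul, abs_of_pos (by positivity : (0:ℝ) < Real.pi / M)]
      calc |x - (n : ℝ)| * (Real.pi / M) ≤ (1 / 2) * (Real.pi / M) := by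
            apply mul_le_mul_of_nonneg_right hround (by positivity)
        _ = Real.pi / (2 * M) := by ring
      
    obtain ⟨h1, h2, h3, h4⟩ := hbox m' hm'M
    have hεlip : h₀ * S * (((m : ℝ) - 1) * (Real.pi / (2 * M))) = ε := by
      rw [hεdef]; field_simp
    have hbr : |fr ((m' : ℝ) * Real.pi / M)| < r - ε := by
      rw [abs_lt]; exact ⟨by simpa [hfr] using (by linarith [h1] : -(r - ε) < _), by
        simpa [hfr] using h2⟩
    have hbi : |fi ((m' : ℝ) * Real.pi / M)| < r - ε := by
      rw [abs_lt]; exact ⟨by simpa [hfi] using (by linarith [h3] : -(r - ε) < _), by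
        simpa [hfi] using h4⟩
    have hLr : |fr y - fr ((m' : ℝ) * Real.pi / M)| ≤ ε := by
      refine (hlipr _ _).trans ?_
      rw [← hεlip]
      apply mul_le_mul_of_nonneg_left _ (by positivity)
      exact mul_le_mul_of_nonneg_left hdist hm1
    have hLi : |fi y - fi ((m' : ℝ) * Real.pi / M)| ≤ ε := by
      refine (hlipi _ _).trans ?_
      rw [← hεlip]
      apply mul_le_mul_of_nonneg_left _ (by positivity)
      exact mul_le_mul_of_nonneg_left hdist hm1
    constructor
    · calc |fr y| ≤ |fr ((m' : ℝ) * Real.pi / M)| + |fr y - fr ((m' : ℝ) * Real.pi / M)| := by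
            have := abs_sub_abs_le_abs_sub (fr y) (fr ((m' : ℝ) * Real.pi / M))
            linarith [abs_sub_comm (fr y) (fr ((m' : ℝ) * Real.pi / M)) ▸ this]
        _ < (r - ε) + ε := by linarith
        _ = r := by ring
    · calc |fi y| ≤ |fi ((m' : ℝ) * Real.pi / M)| + |fi y - fi ((m' : ℝ) * Real.pi / M)| := by
            have := abs_sub_abs_le_abs_sub (fi y) (fi ((m' : ℝ) * Real.pi / M))
            linarith
        _ < (r - ε) + ε := by linarith
        _ = r := by ring
  -- Reduce an arbitrary θ to [0, π]
  have hred : |fr θ| < r ∧ |fi θ| < r := by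
    set k : ℤ := ⌊θ / (2 * Real.pi)⌋ with hkdef
    set x : ℝ := θ - (k : ℝ) * (2 * Real.pi) with hxdef
    have h2π : (0:ℝ) < 2 * Real.pi := by positivity
    have hx0 : 0 ≤ x := by
      have hk : (k : ℝ) ≤ θ / (2 * Real.pi) := Int.floor_le _
      have := (le_div_iff₀ h2π).mp hk
      rw [hxdef]; linarith
    have hx2π : x < 2 * Real.pi := by
      have hk : θ / (2 * Real.pi) < (k : ℝ) + 1 := Int.lt_floor_add_one _
      have := (div_lt_iff₀ h2π).mp hk
      rw [hxdef]; nlinarith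
    have hcosx : ∀ t : ℕ, Real.cos (t * θ) = Real.cos (t * x) := by
      intro t
      have : (t : ℝ) * θ = (t : ℝ) * x + ((t : ℤ) * k : ℤ) * (2 * Real.pi) := by
        rw [hxdef]; push_cast; ring
      rw [this, Real.cos_add_int_mul_two_pi]
    have hsinx : ∀ t : ℕ, Real.sin (t * θ) = Real.sin (t * x) := by
      intro t
      have : (t : ℝ) * θ = (t : ℝ) * x + ((t : ℤ) * k : ℤ) * (2 * Real.pi) := by
        rw [hxdef]; push_cast; ring
      rw [this, Real.sin_add_int_mul_two_pi]
    have hfrx : fr θ = fr x := by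
      simp only [hfr]; exact Finset.sum_congr rfl fun t _ => by rw [hcosx t]
    have hfix : fi θ = fi x := by
      simp only [hfi]; exact Finset.sum_congr rfl fun t _ => by rw [hsinx t]
    rcases le_or_gt x Real.pi with hxπ | hxπ
    · rw [hfrx, hfix]; exact hgrid x hx0 hxπ
    · set y : ℝ := 2 * Real.pi - x with hydef
      have hy0 : 0 ≤ y := by rw [hydef]; linarith
      have hyπ : y ≤ Real.pi := by rw [hydef]; linarith
      have hcosy : ∀ t : ℕ, Real.cos (t * y) = Real.cos (t * x) := by
        intro t
        have : (t : ℝ) * y = -((t : ℝ) * x) + ((t : ℤ) : ℤ) * (2 * Real.pi) := by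
          rw [hydef]; push_cast; ring
        rw [this, Real.cos_add_int_mul_two_pi, Real.cos_neg]
      have hsiny : ∀ t : ℕ, Real.sin (t * y) = -Real.sin (t * x) := by
        intro t
        have : (t : ℝ) * y = -((t : ℝ) * x) + ((t : ℤ) : ℤ) * (2 * Real.pi) := by
          rw [hydef]; push_cast; ring
        rw [this, Real.sin_add_int_mul_two_pi, Real.sin_neg]
      have hfry : fr y = fr x := by
        simp only [hfr]; exact Finset.sum_congr rfl fun t _ => by rw [hcosy t]
      have hfiy : fi y = -fi x := by
        simp only [hfi]
        rw [← Finset.sum_neg_distrib]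
        exact Finset.sum_congr rfl fun t _ => by rw [hsiny t]; ring
      obtain ⟨hA, hB⟩ := hgrid y hy0 hyπ
      rw [hfry] at hA
      rw [hfiy, abs_neg] at hB
      rw [hfrx, hfix]
      exact ⟨hA, hB⟩
  -- Assemble the complex bound
  obtain ⟨hA, hB⟩ := hred
  have hsum : (∑ t ∈ Finset.range m, (g t : ℂ) * Complex.exp (-(Complex.I * (θ * t)))) =
      Complex.ofReal (fr θ) - Complex.ofReal (fi θ) * Complex.I := by
    simp only [hfr, hfi, Complex.ofReal_sum, Finset.sum_mul, ← Finset.sum_sub_distrib]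
    refine Finset.sum_congr rfl fun t _ => ?_
    have harg : -(Complex.I * (θ * t)) = ((-(θ * (t : ℝ)) : ℝ) : ℂ) * Complex.I := by
      push_cast; ring
    rw [harg, Complex.exp_mul_I, ← Complex.ofReal_cos, ← Complex.ofReal_sin]
    have hc : Real.cos (-(θ * (t : ℝ))) = Real.cos ((t : ℝ) * θ) := by
      rw [Real.cos_neg, mul_comm]
    have hs : Real.sin (-(θ * (t : ℝ))) = -Real.sin ((t : ℝ) * θ) := by
      rw [Real.sin_neg, mul_comm]
    rw [hc, hs]
    push_cast
    ring
  rw [hsum]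
  have habs : ‖Complex.ofReal (fr θ) - Complex.ofReal (fi θ) * Complex.I‖ =
      Real.sqrt ((fr θ) ^ 2 + (fi θ) ^ 2) := by
    rw [Complex.norm_def, Complex.normSq_apply]
    simp
    ring_nf
  rw [habs]
  have hlt : (fr θ) ^ 2 + (fi θ) ^ 2 < 2 * r ^ 2 := by
    nlinarith [sq_abs (fr θ), sq_abs (fi θ), abs_nonneg (fr θ), abs_nonneg (fi θ)]
  calc Real.sqrt ((fr θ) ^ 2 + (fi θ) ^ 2) < Real.sqrt (2 * r ^ 2) :=
        Real.sqrt_lt_sqrt (by positivity) hlt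
    _ = Real.sqrt 2 * r := by
        rw [Real.sqrt_mul (by norm_num : (0:ℝ) ≤ 2), Real.sqrt_sq hr.le]
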